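/- Let □ = (1/2)(dA∧dB + dG∧dA + dB∧d(G−A) + 2 d(A+B)∧dC + 2 d(G−A+B)∧dD + d(G−A+B)∧dE + dE∧d(A+B) + d(A+B−E)∧d(G−A+B−E) + 2 d(G+2B−2E)∧dF) be a 2-form in the exterior algebra generated by the seven 1-forms dA, dB, dC, dD, dE, dF, dG. Then □∧□∧□ = ±24 dA∧dB∧dC∧dD∧dE∧dF + dG∧μ for some 5-form μ; in particular, the coefficient of dA∧dB∧dC∧dD∧dE∧dF in □³ modulo multiples of dG has absolute value 24. -/
import Mathlib
set_option maxHeartbeats 4000000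

noncomputable def d7 (i : Fin 7) : ExteriorAlgebra ℝ (Fin 7 → ℝ) :=
  ExteriorAlgebra.ι ℝ (Pi.single i (1 : ℝ))

noncomputable def dA := d7 0
noncomputable def dB := d7 1
noncomputable def dC := d7 2
noncomputable def dD := d7 3
noncomputable def dE := d7 4
noncomputable def dF := d7 5
noncomputable def dG := d7 6

noncomputable def box : ExteriorAlgebra ℝ (Fin 7 → ℝ) :=
  ((2 : ℝ)⁻¹) • (dA * dB + dG * dA + dB * (dG - dA)
    + (2 : ℝ) • ((dA + dB) * dC)
    + (2 : ℝ) • ((dG - dA + dB) * dD)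
    + (dG - dA + dB) * dE
    + dE * (dA + dB)
    + (dA + dB - dE) * (dG - dA + dB - dE)
    + (2 : ℝ) • ((dG + (2 : ℝ) • dB - (2 : ℝ) • dE) * dF))

lemma ianti (x y : Fin 7 → ℝ) :
    ExteriorAlgebra.ι ℝ x * ExteriorAlgebra.ι ℝ y = -(ExteriorAlgebra.ι ℝ y * ExteriorAlgebra.ι ℝ x) := by
  have h := ExteriorAlgebra.ι_sq_zero (R := ℝ) (x + y)
  rw [map_add, mul_add, add_mul, add_mul, ExteriorAlgebra.ι_sq_zero,
    ExteriorAlgebra.ι_sq_zero, zero_add, add_zero] at h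
  exact eq_neg_of_add_eq_zero_right h

lemma e_sq (i : Fin 7) : d7 i * d7 i = 0 := ExteriorAlgebra.ι_sq_zero _
lemma e_sq' (i : Fin 7) (x : ExteriorAlgebra ℝ (Fin 7 → ℝ)) : d7 i * (d7 i * x) = 0 := by
  rw [← mul_assoc, e_sq, zero_mul]
lemma e_swap (i j : Fin 7) (_ : j < i) : d7 i * d7 j = -(d7 j * d7 i) := ianti _ _
lemma e_swap' (i j : Fin 7) (h : j < i) (x : ExteriorAlgebra ℝ (Fin 7 → ℝ)) :
    d7 i * (d7 j * x) = -(d7 j * (d7 i * x)) := by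
  rw [← mul_assoc, e_swap i j h, neg_mul, mul_assoc]

lemma box_eq : box = (2 : ℝ) • (d7 0 * d7 1) + d7 0 * d7 2 - d7 0 * d7 3
    - (2 : ℝ) • (d7 0 * d7 4) + d7 1 * d7 2 + d7 1 * d7 3 + (2 : ℝ) • (d7 1 * d7 5)
    + d7 1 * d7 6 - d7 3 * d7 6 - (2 : ℝ) • (d7 4 * d7 5) - d7 4 * d7 6 - d7 5 * d7 6 := by
  simp only [box, dA, dB, dC, dD, dE, dF, dG]
  simp (disch := decide) only [mul_add, add_mul, sub_mul, mul_sub, smul_add, smul_sub, smul_smul,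
    mul_smul_comm, smul_mul_assoc, e_sq, e_sq', e_swap, e_swap', mul_neg, neg_mul, smul_neg,
    mul_zero, zero_mul, add_zero, zero_add, neg_neg, mul_assoc]
  module

lemma box2_eq : box * box =
    - (4 : ℝ) • (d7 0*d7 1*d7 2*d7 3)
    - (4 : ℝ) • (d7 0*d7 1*d7 2*d7 4)
    - (4 : ℝ) • (d7 0*d7 1*d7 2*d7 5)
    - (2 : ℝ) • (d7 0*d7 1*d7 2*d7 6)
    - (4 : ℝ) • (d7 0*d7 1*d7 3*d7 4)
    + (4 : ℝ) • (d7 0*d7 1*d7 3*d7 5)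
    - (2 : ℝ) • (d7 0*d7 1*d7 3*d7 6)
    - (4 : ℝ) • (d7 0*d7 1*d7 5*d7 6)
    - (2 : ℝ) • (d7 0*d7 2*d7 3*d7 6)
    - (4 : ℝ) • (d7 0*d7 2*d7 4*d7 5)
    - (2 : ℝ) • (d7 0*d7 2*d7 4*d7 6)
    - (2 : ℝ) • (d7 0*d7 2*d7 5*d7 6)
    + (4 : ℝ) • (d7 0*d7 3*d7 4*d7 5)
    - (2 : ℝ) • (d7 0*d7 3*d7 4*d7 6)
    + (2 : ℝ) • (d7 0*d7 3*d7 5*d7 6)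
    + (4 : ℝ) • (d7 0*d7 4*d7 5*d7 6)
    - (2 : ℝ) • (d7 1*d7 2*d7 3*d7 6)
    - (4 : ℝ) • (d7 1*d7 2*d7 4*d7 5)
    - (2 : ℝ) • (d7 1*d7 2*d7 4*d7 6)
    - (2 : ℝ) • (d7 1*d7 2*d7 5*d7 6)
    - (4 : ℝ) • (d7 1*d7 3*d7 4*d7 5)
    - (2 : ℝ) • (d7 1*d7 3*d7 4*d7 6)
    + (2 : ℝ) • (d7 1*d7 3*d7 5*d7 6)
    + (4 : ℝ) • (d7 3*d7 4*d7 5*d7 6) := by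
  rw [box_eq]
  simp (disch := decide) only [mul_add, add_mul, sub_mul, mul_sub, smul_add, smul_sub, smul_smul,
    mul_smul_comm, smul_mul_assoc, e_sq, e_sq', e_swap, e_swap', mul_neg, neg_mul, smul_neg,
    mul_zero, zero_mul, add_zero, zero_add, neg_neg, mul_assoc]
  module

lemma box3_eq : box * box * box =
    (24 : ℝ) • (d7 0*d7 1*d7 2*d7 3*d7 4*d7 5)
    + (12 : ℝ) • (d7 0*d7 1*d7 2*d7 4*d7 5*d7 6)
    + (12 : ℝ) • (d7 0*d7 1*d7 3*d7 4*d7 5*d7 6)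
    + (12 : ℝ) • (d7 0*d7 2*d7 3*d7 4*d7 5*d7 6)
    + (12 : ℝ) • (d7 1*d7 2*d7 3*d7 4*d7 5*d7 6) := by
  rw [box2_eq, box_eq]
  simp (disch := decide) only [mul_add, add_mul, sub_mul, mul_sub, smul_add, smul_sub, smul_smul,
    mul_smul_comm, smul_mul_assoc, e_sq, e_sq', e_swap, e_swap', mul_neg, neg_mul, smul_neg,
    mul_zero, zero_mul, add_zero, zero_add, neg_neg, mul_assoc]
  module

theorem stmt10 :
    ∃ μ : ExteriorAlgebra ℝ (Fin 7 → ℝ),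
      box ^ 3 = (24 : ℝ) • (dA * dB * dC * dD * dE * dF) + dG * μ
      ∨ box ^ 3 = -((24 : ℝ) • (dA * dB * dC * dD * dE * dF)) + dG * μ := by
  refine ⟨(-12 : ℝ) • (d7 0*d7 1*d7 2*d7 4*d7 5 + d7 0*d7 1*d7 3*d7 4*d7 5
    + d7 0*d7 2*d7 3*d7 4*d7 5 + d7 1*d7 2*d7 3*d7 4*d7 5), Or.inl ?_⟩
  have h3 : box ^ 3 = box * box * box := by rw [pow_succ, pow_succ, pow_one]
  rw [h3, box3_eq]
  simp only [dA, dB, dC, dD, dE, dF, dG]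
  simp (disch := decide) only [mul_add, add_mul, sub_mul, mul_sub, smul_add, smul_sub, smul_smul,
    mul_smul_comm, smul_mul_assoc, e_sq, e_sq', e_swap, e_swap', mul_neg, neg_mul, smul_neg,
    mul_zero, zero_mul, add_zero, zero_add, neg_neg, mul_assoc]
  module
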